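/- Let f have no negative loops and f' be the embedding construction. For all x, y ∈ {0,1}^n, any path in Γ(f') from (x, x̄) to (y, ȳ) with no internal vertex in Ω = {(z,z̄) : z ∈ {0,1}^n} is either (x,x̄) → (y,x̄) → (y,ȳ) or (x,x̄) → (x,ȳ) → (y,ȳ), and such a path exists if and only if x → y is a transition of Γ(f). -/

import Mathlib

/-- One asynchronous update step of the Boolean network `f`. -/
def Step {I : Type*} [DecidableEq I] (f : (I → Bool) → I → Bool) (x y : I → Bool) : Prop :=
  ∃ i, f x i ≠ x i ∧ y = Function.update x i (f x i)

/-- `Γ(f)` has a path from `x` to `y` of length `l`. -/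
def PathLen {I : Type*} [DecidableEq I] (f : (I → Bool) → I → Bool)
    (x y : I → Bool) (l : ℕ) : Prop :=
  ∃ p : ℕ → I → Bool, p 0 = x ∧ p l = y ∧ ∀ k < l, Step f (p k) (p (k + 1))

/-- Positive arc from `j` to `i` in the interaction graph `G(f)`. -/
def PosArc {n : ℕ} (f : (Fin n → Bool) → Fin n → Bool) (j i : Fin n) : Prop :=
  ∃ x, f (Function.update x j true) i = true ∧ f (Function.update x j false) i = false

/-- Negative arc from `j` to `i` in the interaction graph `G(f)`. -/
def NegArc {n : ℕ} (f : (Fin n → Bool) → Fin n → Bool) (j i : Fin n) : Prop :=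
  ∃ x, f (Function.update x j true) i = false ∧ f (Function.update x j false) i = true

/-- Arc in the underlying unsigned digraph of `G(f)`. -/
def Arc {n : ℕ} (f : (Fin n → Bool) → Fin n → Bool) (j i : Fin n) : Prop :=
  PosArc f j i ∨ NegArc f j i

/-- The interaction graph `G(f)` is acyclic (no directed cycle, including loops). -/
def AcyclicIG {n : ℕ} (f : (Fin n → Bool) → Fin n → Bool) : Prop :=
  ∀ i, ¬ Relation.TransGen (Arc f) i i

/-- Hamming distance. -/
def ham {n : ℕ} (x y : Fin n → Bool) : ℕ :=
  (Finset.univ.filter fun i => x i ≠ y i).card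

/-- Componentwise negation. -/
def negc {n : ℕ} (x : Fin n → Bool) : Fin n → Bool := fun i => !(x i)

/-- Number of ones (weight). -/
def wt {n : ℕ} (x : Fin n → Bool) : ℕ :=
  (Finset.univ.filter fun i => x i = true).card

/-- `x` with coordinate `i` flipped. -/
def flipAt {n : ℕ} (x : Fin n → Bool) (i : Fin n) : Fin n → Bool :=
  Function.update x i (!(x i))

/-- `G(f)` has no negative loops. -/
def NoNegLoop {n : ℕ} (f : (Fin n → Bool) → Fin n → Bool) : Prop :=
  ∀ i, ¬ NegArc f i i

/-- First-half components of the embedding construction `f'`. -/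
def F1 {n : ℕ} (f : (Fin n → Bool) → Fin n → Bool) (x y : Fin n → Bool) (i : Fin n) : Bool :=
  if y = negc x ∨ flipAt y i = negc x then f x i
  else if wt x + wt y = n then !(x i)
  else if wt x + wt y = n + 1 then true
  else if wt x + wt y + 1 = n then false
  else if n + 2 ≤ wt x + wt y then true
  else false

/-- The embedding construction `f' : {0,1}^{2n} → {0,1}^{2n}`, with the `2n`
coordinates indexed by `Fin n ⊕ Fin n`. -/
def Fext {n : ℕ} (f : (Fin n → Bool) → Fin n → Bool) (z : (Fin n ⊕ Fin n) → Bool) :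
    (Fin n ⊕ Fin n) → Bool :=
  Sum.elim (fun i => F1 f (z ∘ Sum.inl) (z ∘ Sum.inr) i)
           (fun i => !(F1 f (negc (z ∘ Sum.inr)) (negc (z ∘ Sum.inl)) i))

/-- Concatenation `(x, y) ∈ {0,1}^{2n}`. -/
def pair {n : ℕ} (x y : Fin n → Bool) : (Fin n ⊕ Fin n) → Bool := Sum.elim x y

section Aux
variable {n : ℕ}

lemma negc_negc (x : Fin n → Bool) : negc (negc x) = x := by
  funext i; simp [negc]

lemma negc_inj {x y : Fin n → Bool} (h : negc x = negc y) : x = y := by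
  rw [← negc_negc x, h, negc_negc]

lemma negc_update (x : Fin n → Bool) (i : Fin n) (t : Bool) :
    negc (Function.update x i t) = Function.update (negc x) i (!t) := by
  funext j
  rcases eq_or_ne j i with rfl | hj
  · simp [negc]
  · simp [negc, Function.update_of_ne hj]

lemma pair_inl (x y : Fin n → Bool) : (pair x y) ∘ Sum.inl = x := rfl
lemma pair_inr (x y : Fin n → Bool) : (pair x y) ∘ Sum.inr = y := rfl

lemma pair_eq_iff {a b c d : Fin n → Bool} : pair a b = pair c d ↔ a = c ∧ b = d := by
  constructor
  · intro h
    constructor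
    · funext i; exact congrFun h (Sum.inl i)
    · funext i; exact congrFun h (Sum.inr i)
  · rintro ⟨rfl, rfl⟩; rfl

lemma update_pair_inl (a b : Fin n → Bool) (i : Fin n) (t : Bool) :
    Function.update (pair a b) (Sum.inl i) t = pair (Function.update a i t) b := by
  funext w
  rcases w with j | j
  · rcases eq_or_ne j i with rfl | hj
    · simp [pair]
    · simp [pair, Function.update_of_ne hj, Function.update_of_ne (by simp [hj] : (Sum.inl j : Fin n ⊕ Fin n) ≠ Sum.inl i)]
  · simp [pair, Function.update_of_ne (by simp : (Sum.inr j : Fin n ⊕ Fin n) ≠ Sum.inl i)]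

lemma update_pair_inr (a b : Fin n → Bool) (i : Fin n) (t : Bool) :
    Function.update (pair a b) (Sum.inr i) t = pair a (Function.update b i t) := by
  funext w
  rcases w with j | j
  · simp [pair, Function.update_of_ne (by simp : (Sum.inl j : Fin n ⊕ Fin n) ≠ Sum.inr i)]
  · rcases eq_or_ne j i with rfl | hj
    · simp [pair]
    · simp [pair, Function.update_of_ne hj, Function.update_of_ne (by simp [hj] : (Sum.inr j : Fin n ⊕ Fin n) ≠ Sum.inr i)]

/-- key counting identity -/
lemma wt_add_wt (u v : Fin n → Bool) :
    wt u + wt v + (Finset.univ.filter fun i => u i = false ∧ v i = false).card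
      = n + (Finset.univ.filter fun i => u i = true ∧ v i = true).card := by
  simp only [wt, Finset.card_filter]
  rw [← Finset.sum_add_distrib, ← Finset.sum_add_distrib]
  have hr : n + (∑ i : Fin n, if u i = true ∧ v i = true then 1 else 0)
      = ∑ i : Fin n, (1 + if u i = true ∧ v i = true then 1 else 0) := by
    rw [Finset.sum_add_distrib]; simp
  rw [hr]
  apply Finset.sum_congr rfl
  intro i _
  cases hu : u i <;> cases hv : v i <;> simp

lemma wt_negc (u : Fin n → Bool) : wt u + wt (negc u) = n := by
  have := wt_add_wt u (negc u)
  simpa [negc] using this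

lemma F1_near {f : (Fin n → Bool) → Fin n → Bool} {u v : Fin n → Bool} {i : Fin n}
    (h : v = negc u ∨ flipAt v i = negc u) : F1 f u v i = f u i := by
  rw [F1, if_pos h]

lemma F1_big {f : (Fin n → Bool) → Fin n → Bool} {u v : Fin n → Bool} {i : Fin n}
    (h1 : v ≠ negc u) (h2 : flipAt v i ≠ negc u) (hw : n + 1 ≤ wt u + wt v) :
    F1 f u v i = true := by
  rw [F1, if_neg (by push_neg; exact ⟨h1, h2⟩)]
  split_ifs <;> first | rfl | omega

lemma F1_small {f : (Fin n → Bool) → Fin n → Bool} {u v : Fin n → Bool} {i : Fin n}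
    (h1 : v ≠ negc u) (h2 : flipAt v i ≠ negc u) (hw : wt u + wt v + 1 ≤ n) :
    F1 f u v i = false := by
  rw [F1, if_neg (by push_neg; exact ⟨h1, h2⟩)]
  split_ifs <;> first | rfl | omega

lemma ne_negc_of_eq {u v : Fin n → Bool} {j : Fin n} (h : u j = v j) : v ≠ negc u := by
  intro he
  have := congrFun he j
  rw [← h] at this
  simp [negc] at this

lemma flip_ne_negc_of_eq {u v : Fin n → Bool} {j i : Fin n} (h : u j = v j) (hji : j ≠ i) :
    flipAt v i ≠ negc u := by
  intro he
  have := congrFun he j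
  rw [flipAt, Function.update_of_ne hji, ← h] at this
  simp [negc] at this

lemma Fext_inl (f : (Fin n → Bool) → Fin n → Bool) (u v : Fin n → Bool) (i : Fin n) :
    Fext f (pair u v) (Sum.inl i) = F1 f u v i := rfl

lemma Fext_inr (f : (Fin n → Bool) → Fin n → Bool) (u v : Fin n → Bool) (i : Fin n) :
    Fext f (pair u v) (Sum.inr i) = !(F1 f (negc v) (negc u) i) := rfl

/-! ### the mirror symmetry σ -/

def sigma (z : (Fin n ⊕ Fin n) → Bool) : (Fin n ⊕ Fin n) → Bool :=
  Sum.elim (fun i => !(z (Sum.inr i))) (fun i => !(z (Sum.inl i)))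

lemma sigma_pair (a b : Fin n → Bool) : sigma (pair a b) = pair (negc b) (negc a) := rfl

lemma sigma_sigma (z : (Fin n ⊕ Fin n) → Bool) : sigma (sigma z) = z := by
  funext w; rcases w with j | j <;> simp [sigma]

lemma sigma_comp_inl (z : (Fin n ⊕ Fin n) → Bool) :
    (sigma z) ∘ Sum.inl = negc (z ∘ Sum.inr) := rfl

lemma sigma_comp_inr (z : (Fin n ⊕ Fin n) → Bool) :
    (sigma z) ∘ Sum.inr = negc (z ∘ Sum.inl) := rfl

lemma Fext_sigma_inl (f : (Fin n → Bool) → Fin n → Bool) (z : (Fin n ⊕ Fin n) → Bool)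
    (i : Fin n) : Fext f (sigma z) (Sum.inl i) = !(Fext f z (Sum.inr i)) := by
  show F1 f ((sigma z) ∘ Sum.inl) ((sigma z) ∘ Sum.inr) i = (!(Fext f z (Sum.inr i)))
  rw [sigma_comp_inl, sigma_comp_inr]
  simp [Fext]

lemma Fext_sigma_inr (f : (Fin n → Bool) → Fin n → Bool) (z : (Fin n ⊕ Fin n) → Bool)
    (i : Fin n) : Fext f (sigma z) (Sum.inr i) = !(Fext f z (Sum.inl i)) := by
  show (!(F1 f (negc ((sigma z) ∘ Sum.inr)) (negc ((sigma z) ∘ Sum.inl)) i))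
      = (!(Fext f z (Sum.inl i)))
  rw [sigma_comp_inl, sigma_comp_inr, negc_negc, negc_negc]
  simp [Fext]

lemma sigma_update_inl (z : (Fin n ⊕ Fin n) → Bool) (i : Fin n) (t : Bool) :
    sigma (Function.update z (Sum.inl i) t) = Function.update (sigma z) (Sum.inr i) (!t) := by
  funext w
  rcases w with j | j
  · simp [sigma, Function.update_of_ne (show (Sum.inr j : Fin n ⊕ Fin n) ≠ Sum.inl i by simp),
      Function.update_of_ne (show (Sum.inl j : Fin n ⊕ Fin n) ≠ Sum.inr i by simp)]
  · rcases eq_or_ne j i with rfl | hj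
    · simp [sigma]
    · simp [sigma, Function.update_of_ne hj,
        Function.update_of_ne (show (Sum.inl j : Fin n ⊕ Fin n) ≠ Sum.inl i by simp [hj]),
        Function.update_of_ne (show (Sum.inr j : Fin n ⊕ Fin n) ≠ Sum.inr i by simp [hj])]

lemma sigma_update_inr (z : (Fin n ⊕ Fin n) → Bool) (i : Fin n) (t : Bool) :
    sigma (Function.update z (Sum.inr i) t) = Function.update (sigma z) (Sum.inl i) (!t) := by
  funext w
  rcases w with j | j
  · rcases eq_or_ne j i with rfl | hj
    · simp [sigma]
    · simp [sigma, Function.update_of_ne hj,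
        Function.update_of_ne (show (Sum.inr j : Fin n ⊕ Fin n) ≠ Sum.inr i by simp [hj]),
        Function.update_of_ne (show (Sum.inl j : Fin n ⊕ Fin n) ≠ Sum.inl i by simp [hj])]
  · simp [sigma, Function.update_of_ne (show (Sum.inl j : Fin n ⊕ Fin n) ≠ Sum.inr i by simp),
      Function.update_of_ne (show (Sum.inr j : Fin n ⊕ Fin n) ≠ Sum.inl i by simp)]

lemma step_sigma {f : (Fin n → Bool) → Fin n → Bool} {z z' : (Fin n ⊕ Fin n) → Bool}
    (h : Step (Fext f) z z') : Step (Fext f) (sigma z) (sigma z') := by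
  obtain ⟨w, hne, rfl⟩ := h
  rcases w with i | i
  · refine ⟨Sum.inr i, ?_, ?_⟩
    · rw [Fext_sigma_inr]
      intro h
      apply hne
      simpa [sigma] using congrArg (!·) h
    · rw [sigma_update_inl, Fext_sigma_inr]
  · refine ⟨Sum.inl i, ?_, ?_⟩
    · rw [Fext_sigma_inl]
      intro h
      apply hne
      simpa [sigma] using congrArg (!·) h
    · rw [sigma_update_inr, Fext_sigma_inl]

/-! ### the far region and its invariance -/

def eqset (z : (Fin n ⊕ Fin n) → Bool) : Finset (Fin n) :=
  Finset.univ.filter (fun i => z (Sum.inl i) = z (Sum.inr i))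

def Reg (z : (Fin n ⊕ Fin n) → Bool) : Prop :=
  ∃ c : Bool, 2 ≤ (eqset z).card ∧ ∀ i, z (Sum.inl i) = z (Sum.inr i) → z (Sum.inl i) = c

lemma exists_other {z : (Fin n ⊕ Fin n) → Bool} (h : 2 ≤ (eqset z).card) (i : Fin n) :
    ∃ j, z (Sum.inl j) = z (Sum.inr j) ∧ j ≠ i := by
  by_contra hc
  push_neg at hc
  have hsub : eqset z ⊆ {i} := by
    intro j hj
    rw [eqset, Finset.mem_filter] at hj
    simp [hc j hj.2]
  have := Finset.card_le_card hsub
  simp at this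
  omega

lemma reg_wt_true {z : (Fin n ⊕ Fin n) → Bool}
    (hc : ∀ i, z (Sum.inl i) = z (Sum.inr i) → z (Sum.inl i) = true) :
    wt (z ∘ Sum.inl) + wt (z ∘ Sum.inr) = n + (eqset z).card := by
  have h := wt_add_wt (z ∘ Sum.inl) (z ∘ Sum.inr)
  have hb : (Finset.univ.filter fun i => (z ∘ Sum.inl) i = false ∧ (z ∘ Sum.inr) i = false) = ∅ := by
    apply Finset.filter_false_of_mem
    intro i _
    simp only [Function.comp_apply]
    rintro ⟨h1, h2⟩
    have := hc i (h1.trans h2.symm)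
    simp [h1] at this
  have ha : (Finset.univ.filter fun i => (z ∘ Sum.inl) i = true ∧ (z ∘ Sum.inr) i = true) = eqset z := by
    apply Finset.filter_congr
    intro i _
    simp only [Function.comp_apply, eqset]
    constructor
    · rintro ⟨h1, h2⟩; exact h1.trans h2.symm
    · intro h1
      have h2 := hc i h1
      exact ⟨h2, h1 ▸ h2⟩
  rw [hb, ha] at h
  simpa [eqset] using h

lemma reg_wt_false {z : (Fin n ⊕ Fin n) → Bool}
    (hc : ∀ i, z (Sum.inl i) = z (Sum.inr i) → z (Sum.inl i) = false) :
    wt (z ∘ Sum.inl) + wt (z ∘ Sum.inr) + (eqset z).card = n := by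
  have h := wt_add_wt (z ∘ Sum.inl) (z ∘ Sum.inr)
  have ha : (Finset.univ.filter fun i => (z ∘ Sum.inl) i = true ∧ (z ∘ Sum.inr) i = true) = ∅ := by
    apply Finset.filter_false_of_mem
    intro i _
    simp only [Function.comp_apply]
    rintro ⟨h1, h2⟩
    have := hc i (h1.trans h2.symm)
    simp [h1] at this
  have hb : (Finset.univ.filter fun i => (z ∘ Sum.inl) i = false ∧ (z ∘ Sum.inr) i = false) = eqset z := by
    apply Finset.filter_congr
    intro i _
    simp only [Function.comp_apply, eqset]
    constructor
    · rintro ⟨h1, h2⟩; exact h1.trans h2.symm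
    · intro h1
      have h2 := hc i h1
      refine ⟨h2, h1 ▸ h2⟩
  rw [hb, ha] at h
  simpa [eqset] using h

lemma wt_negc' (u : Fin n → Bool) : wt (negc u) = n - wt u := by
  have := wt_negc u; omega

lemma Fext_reg (f : (Fin n → Bool) → Fin n → Bool) {z : (Fin n ⊕ Fin n) → Bool} {c : Bool}
    (h2 : 2 ≤ (eqset z).card)
    (hc : ∀ i, z (Sum.inl i) = z (Sum.inr i) → z (Sum.inl i) = c) :
    ∀ w, Fext f z w = c := by
  intro w
  have hwl : wt (z ∘ Sum.inl) ≤ n := by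
    rw [wt]; have := Finset.card_filter_le (Finset.univ : Finset (Fin n))
      (fun i => (z ∘ Sum.inl) i = true); simpa using this
  have hwr : wt (z ∘ Sum.inr) ≤ n := by
    rw [wt]; have := Finset.card_filter_le (Finset.univ : Finset (Fin n))
      (fun i => (z ∘ Sum.inr) i = true); simpa using this
  rcases w with i | i
  · show F1 f (z ∘ Sum.inl) (z ∘ Sum.inr) i = c
    obtain ⟨j, hj, hji⟩ := exists_other h2 i
    have hc1 : (z ∘ Sum.inr) ≠ negc (z ∘ Sum.inl) := ne_negc_of_eq (j := j) hj
    have hc2 : flipAt (z ∘ Sum.inr) i ≠ negc (z ∘ Sum.inl) := flip_ne_negc_of_eq hj hji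
    cases c with
    | true =>
      exact F1_big hc1 hc2 (by rw [reg_wt_true hc]; omega)
    | false =>
      exact F1_small hc1 hc2 (by have := reg_wt_false hc; omega)
  · show (!(F1 f (negc (z ∘ Sum.inr)) (negc (z ∘ Sum.inl)) i)) = c
    obtain ⟨j, hj, hji⟩ := exists_other h2 i
    have hj' : (negc (z ∘ Sum.inr)) j = (negc (z ∘ Sum.inl)) j := by
      simp [negc, Function.comp_apply, hj]
    have hc1 : negc (z ∘ Sum.inl) ≠ negc (negc (z ∘ Sum.inr)) := ne_negc_of_eq (j := j) hj'
    have hc2 : flipAt (negc (z ∘ Sum.inl)) i ≠ negc (negc (z ∘ Sum.inr)) :=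
      flip_ne_negc_of_eq hj' hji
    have hwn : wt (negc (z ∘ Sum.inr)) + wt (negc (z ∘ Sum.inl))
        + (wt (z ∘ Sum.inl) + wt (z ∘ Sum.inr)) = 2 * n := by
      have := wt_negc (z ∘ Sum.inl); have := wt_negc (z ∘ Sum.inr); omega
    cases c with
    | true =>
      have hs := reg_wt_true hc
      rw [F1_small hc1 hc2 (by omega)]
      rfl
    | false =>
      have hs := reg_wt_false hc
      rw [F1_big hc1 hc2 (by omega)]
      rfl

lemma reg_step {f : (Fin n → Bool) → Fin n → Bool} {z z' : (Fin n ⊕ Fin n) → Bool}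
    (hreg : Reg z) (hstep : Step (Fext f) z z') : Reg z' := by
  obtain ⟨c, h2, hc⟩ := hreg
  obtain ⟨w, hne, rfl⟩ := hstep
  have hv := Fext_reg f h2 hc
  rw [hv w] at hne ⊢
  refine ⟨c, ?_, ?_⟩
  · -- card
    refine le_trans h2 (Finset.card_le_card ?_)
    intro j hj
    rw [eqset, Finset.mem_filter] at hj ⊢
    refine ⟨Finset.mem_univ _, ?_⟩
    have hwl : w ≠ Sum.inl j := by
      rintro rfl
      exact hne (hc j hj.2).symm
    have hwr : w ≠ Sum.inr j := by
      rintro rfl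
      exact hne (hj.2.symm.trans (hc j hj.2)).symm
    rw [Function.update_of_ne (Ne.symm hwl), Function.update_of_ne (Ne.symm hwr)]
    exact hj.2
  · -- constant
    intro j hj
    rcases eq_or_ne w (Sum.inl j) with rfl | hwl
    · rw [Function.update_self]
    · rw [Function.update_of_ne (Ne.symm hwl)] at hj ⊢
      rcases eq_or_ne w (Sum.inr j) with rfl | hwr
      · rwa [Function.update_self] at hj
      · rw [Function.update_of_ne (Ne.symm hwr)] at hj
        exact hc j hj

lemma reg_not_omega {z : (Fin n ⊕ Fin n) → Bool} (hreg : Reg z) :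
    ¬ ∃ w, z = pair w (negc w) := by
  rintro ⟨w, rfl⟩
  obtain ⟨c, h2, -⟩ := hreg
  have : eqset (pair w (negc w)) = ∅ := by
    apply Finset.filter_false_of_mem
    intro i _
    simp [pair, negc]
  rw [this] at h2
  simp at h2

/-! ### steps from Ω and from distance-1 vertices -/

lemma step_from_omega {f : (Fin n → Bool) → Fin n → Bool} {x : Fin n → Bool}
    {z' : (Fin n ⊕ Fin n) → Bool} (h : Step (Fext f) (pair x (negc x)) z') :
    ∃ i, f x i ≠ x i ∧
      (z' = pair (Function.update x i (f x i)) (negc x) ∨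
       z' = pair x (negc (Function.update x i (f x i)))) := by
  obtain ⟨w, hne, rfl⟩ := h
  rcases w with i | i
  · have hF : Fext f (pair x (negc x)) (Sum.inl i) = f x i := by
      rw [Fext_inl]; exact F1_near (Or.inl rfl)
    rw [hF] at hne ⊢
    refine ⟨i, hne, Or.inl ?_⟩
    exact update_pair_inl x (negc x) i (f x i)
  · have hF : Fext f (pair x (negc x)) (Sum.inr i) = !(f x i) := by
      rw [Fext_inr, negc_negc, F1_near (Or.inl rfl)]
    rw [hF] at hne ⊢
    have hxi : f x i ≠ x i := by
      intro h
      apply hne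
      show (!(f x i)) = (negc x) i
      simp [negc, h]
    refine ⟨i, hxi, Or.inr ?_⟩
    rw [update_pair_inr, negc_update]

lemma reg_of_two {z' : (Fin n ⊕ Fin n) → Bool} {i j : Fin n} {c : Bool} (hij : i ≠ j)
    (h1l : z' (Sum.inl i) = c) (h1r : z' (Sum.inr i) = c)
    (h2l : z' (Sum.inl j) = c) (h2r : z' (Sum.inr j) = c)
    (hother : ∀ k, k ≠ i → k ≠ j → z' (Sum.inl k) ≠ z' (Sum.inr k)) : Reg z' := by
  refine ⟨c, ?_, ?_⟩
  · have hsub : ({i, j} : Finset (Fin n)) ⊆ eqset z' := by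
      intro k hk
      rw [eqset, Finset.mem_filter]
      refine ⟨Finset.mem_univ _, ?_⟩
      rcases Finset.mem_insert.1 hk with rfl | hk
      · rw [h1l, h1r]
      · rw [Finset.mem_singleton] at hk
        subst hk
        rw [h2l, h2r]
    calc 2 = ({i, j} : Finset (Fin n)).card := (Finset.card_pair hij).symm
      _ ≤ (eqset z').card := Finset.card_le_card hsub
  · intro k hk
    rcases eq_or_ne k i with rfl | hki
    · rw [h1l]
    rcases eq_or_ne k j with rfl | hkj
    · rw [h2l]
    exact absurd hk (hother k hki hkj)

lemma wt_update_true {x : Fin n → Bool} {i : Fin n} (hx : x i = false) :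
    wt (Function.update x i true) = wt x + 1 := by
  rw [wt, wt]
  have : (Finset.univ.filter fun j => Function.update x i true j = true)
      = insert i (Finset.univ.filter fun j => x j = true) := by
    ext j
    rcases eq_or_ne j i with rfl | hj
    · simp
    · simp [Function.update_of_ne hj, hj]
  rw [this, Finset.card_insert_of_notMem (by simp [hx])]

lemma wt_update_false {x : Fin n → Bool} {i : Fin n} (hx : x i = true) :
    wt (Function.update x i false) + 1 = wt x := by
  rw [wt, wt]
  have : (Finset.univ.filter fun j => x j = true)
      = insert i (Finset.univ.filter fun j => Function.update x i false j = true) := by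
    ext j
    rcases eq_or_ne j i with rfl | hj
    · simp [hx]
    · simp [Function.update_of_ne hj, hj]
  rw [this, Finset.card_insert_of_notMem (by simp)]

lemma step_from_A {f : (Fin n → Bool) → Fin n → Bool} (hf : NoNegLoop f)
    {x : Fin n → Bool} {i : Fin n} (hi : f x i ≠ x i) {z' : (Fin n ⊕ Fin n) → Bool}
    (h : Step (Fext f) (pair (Function.update x i (f x i)) (negc x)) z') :
    z' = pair (Function.update x i (f x i)) (negc (Function.update x i (f x i))) ∨ Reg z' := by
  set xi := Function.update x i (f x i) with hxi_def
  have hfx : f x i = !(x i) := by revert hi; cases f x i <;> cases x i <;> simp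
  have hxii : xi i = !(x i) := by rw [hxi_def, Function.update_self, hfx]
  have hxij : ∀ j, j ≠ i → xi j = x j := fun j hj => Function.update_of_ne hj _ _
  have hwn : wt x + wt (negc x) = n := wt_negc x
  have hwxi : wt xi + wt (negc xi) = n := wt_negc xi
  have hsA : f x i = true → wt xi = wt x + 1 := by
    intro hft
    have hx : x i = false := by rw [hfx] at hft; simpa using hft
    rw [hxi_def, hft]
    exact wt_update_true hx
  have hsB : f x i = false → wt xi + 1 = wt x := by
    intro hft
    have hx : x i = true := by rw [hfx] at hft; simpa using hft
    rw [hxi_def, hft]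
    exact wt_update_false hx
  have hval1 : ∀ j, j ≠ i → F1 f xi (negc x) j = f x i := by
    intro j hj
    have heq : xi i = (negc x) i := by rw [hxii]; rfl
    have hc1 : negc x ≠ negc xi := ne_negc_of_eq heq
    have hc2 : flipAt (negc x) j ≠ negc xi := flip_ne_negc_of_eq heq (Ne.symm hj)
    cases hfv : f x i
    · apply F1_small hc1 hc2
      have := hsB hfv; omega
    · apply F1_big hc1 hc2
      have := hsA hfv; omega
  have hval2 : ∀ j, j ≠ i → F1 f x (negc xi) j = !(f x i) := by
    intro j hj
    have hc1 : negc xi ≠ negc x := by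
      intro h
      have h2 := congrFun (negc_inj h) i
      rw [hxii] at h2
      simp at h2
    have hc2 : flipAt (negc xi) j ≠ negc x := by
      intro h
      have h2 := congrFun h i
      rw [flipAt, Function.update_of_ne (Ne.symm hj)] at h2
      rw [show (negc xi) i = x i from by simp [negc, hxii]] at h2
      simp [negc] at h2
    cases hfv : f x i
    · apply F1_big hc1 hc2
      have := hsB hfv; omega
    · apply F1_small hc1 hc2
      have := hsA hfv; omega
  obtain ⟨w, hne, rfl⟩ := h
  rcases w with j | j
  · rcases eq_or_ne j i with rfl | hj
    · exfalso
      have hF : Fext f (pair xi (negc x)) (Sum.inl j) = f xi j := by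
        rw [Fext_inl]
        apply F1_near
        right
        funext k
        rcases eq_or_ne k j with rfl | hk
        · simp [flipAt, negc, hxii]
        · simp [flipAt, Function.update_of_ne hk, negc, hxij k hk]
      rw [hF] at hne
      have hne' : f xi j ≠ xi j := hne
      have hfxi : f xi j = x j := by
        rw [hxii] at hne'
        revert hne'
        cases x j <;> cases f xi j <;> simp
      apply hf j
      cases hx : x j
      · refine ⟨x, ?_, ?_⟩
        · have he : Function.update x j true = xi := by
            rw [hxi_def, hfx, hx]; rfl
          rw [he, hfxi, hx]
        · have he : Function.update x j false = x := by
            rw [← hx]; exact Function.update_eq_self j x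
          rw [he, hfx, hx]; rfl
      · refine ⟨x, ?_, ?_⟩
        · have he : Function.update x j true = x := by
            rw [← hx]; exact Function.update_eq_self j x
          rw [he, hfx, hx]; rfl
        · have he : Function.update x j false = xi := by
            rw [hxi_def, hfx, hx]; rfl
          rw [he, hfxi, hx]
    · right
      have hF : Fext f (pair xi (negc x)) (Sum.inl j) = f x i := by
        rw [Fext_inl]; exact hval1 j hj
      rw [hF] at hne ⊢
      have hne' : f x i ≠ xi j := hne
      have hxj : x j ≠ f x i := by
        rw [hxij j hj] at hne'
        exact fun h => hne' h.symm
      rw [update_pair_inl]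
      apply reg_of_two (i := i) (j := j) (c := f x i) (Ne.symm hj)
      · show Function.update xi j (f x i) i = f x i
        rw [Function.update_of_ne (Ne.symm hj), hxii, hfx]
      · show (!(x i)) = f x i
        rw [hfx]
      · show Function.update xi j (f x i) j = f x i
        rw [Function.update_self]
      · show (!(x j)) = f x i
        revert hxj
        cases hx : x j <;> cases hfv : f x i <;> simp
      · intro k hki hkj
        show Function.update xi j (f x i) k ≠ (negc x) k
        rw [Function.update_of_ne hkj, hxij k hki]
        simp [negc]
  · rcases eq_or_ne j i with rfl | hj
    · left
      have hF : Fext f (pair xi (negc x)) (Sum.inr j) = !(f x j) := by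
        rw [Fext_inr, negc_negc]
        rw [F1_near (Or.inr ?_)]
        funext k
        rcases eq_or_ne k j with rfl | hk
        · simp [flipAt, negc, hxii]
        · simp [flipAt, Function.update_of_ne hk, negc, hxij k hk]
      rw [hF, update_pair_inr, hxi_def, negc_update]
    · right
      have hF : Fext f (pair xi (negc x)) (Sum.inr j) = f x i := by
        rw [Fext_inr, negc_negc, hval2 j hj]
        simp
      rw [hF] at hne ⊢
      have hne' : f x i ≠ !(x j) := hne
      have hxj : x j = f x i := by
        revert hne'
        cases x j <;> cases f x i <;> simp
      rw [update_pair_inr]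
      apply reg_of_two (i := i) (j := j) (c := f x i) (Ne.symm hj)
      · show xi i = f x i
        rw [hxii, hfx]
      · show Function.update (negc x) j (f x i) i = f x i
        rw [Function.update_of_ne (Ne.symm hj)]
        show (!(x i)) = f x i
        rw [hfx]
      · show xi j = f x i
        rw [hxij j hj, hxj]
      · show Function.update (negc x) j (f x i) j = f x i
        rw [Function.update_self]
      · intro k hki hkj
        show xi k ≠ Function.update (negc x) j (f x i) k
        rw [Function.update_of_ne hkj, hxij k hki]
        simp [negc]

lemma reg_sigma {z : (Fin n ⊕ Fin n) → Bool} (h : Reg (sigma z)) : Reg z := by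
  obtain ⟨c, h2, hc⟩ := h
  refine ⟨!c, ?_, ?_⟩
  · have he : eqset (sigma z) = eqset z := by
      ext k
      simp only [eqset, Finset.mem_filter, Finset.mem_univ, true_and]
      simp only [sigma,
        Sum.elim_inl, Sum.elim_inr]
      constructor
      · intro h
        have := congrArg (!·) h
        simpa using this.symm
      · intro h
        rw [h]
    rwa [he] at h2
  · intro k hk
    have h1 : (sigma z) (Sum.inl k) = c := by
      apply hc
      show (!(z (Sum.inr k))) = (!(z (Sum.inl k)))
      rw [hk]
    rw [show (sigma z) (Sum.inl k) = !(z (Sum.inr k)) from rfl, ← hk] at h1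
    cases hz : z (Sum.inl k) <;> cases c <;> simp_all

lemma step_from_B {f : (Fin n → Bool) → Fin n → Bool} (hf : NoNegLoop f)
    {x : Fin n → Bool} {i : Fin n} (hi : f x i ≠ x i) {z' : (Fin n ⊕ Fin n) → Bool}
    (h : Step (Fext f) (pair x (negc (Function.update x i (f x i)))) z') :
    z' = pair (Function.update x i (f x i)) (negc (Function.update x i (f x i))) ∨ Reg z' := by
  have h2 := step_sigma h
  rw [sigma_pair, negc_negc] at h2
  rcases step_from_A hf hi h2 with he | hr
  · left
    have h3 := congrArg sigma he
    rw [sigma_sigma, sigma_pair, negc_negc] at h3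
    exact h3
  · right; exact reg_sigma hr

lemma A_not_omega {f : (Fin n → Bool) → Fin n → Bool} {x : Fin n → Bool} {i : Fin n}
    (hi : f x i ≠ x i) :
    ¬ ∃ w, pair (Function.update x i (f x i)) (negc x) = pair w (negc w) := by
  rintro ⟨w, hw⟩
  obtain ⟨h1, h2⟩ := pair_eq_iff.1 hw
  have hxw : x = w := negc_inj h2
  subst hxw
  have := congrFun h1 i
  rw [Function.update_self] at this
  exact hi this

lemma B_not_omega {f : (Fin n → Bool) → Fin n → Bool} {x : Fin n → Bool} {i : Fin n}
    (hi : f x i ≠ x i) :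
    ¬ ∃ w, pair x (negc (Function.update x i (f x i))) = pair w (negc w) := by
  rintro ⟨w, hw⟩
  obtain ⟨h1, h2⟩ := pair_eq_iff.1 hw
  subst h1
  have hxw := negc_inj h2
  have := congrFun hxw i
  rw [Function.update_self] at this
  exact hi this

lemma flip_negc_update (x : Fin n → Bool) (i : Fin n) (b : Bool) (hb : b = !(x i)) :
    flipAt (negc (Function.update x i b)) i = negc x := by
  funext k
  rcases eq_or_ne k i with rfl | hk
  · simp [flipAt, negc, hb]
  · simp [flipAt, Function.update_of_ne hk, negc]

lemma main_path {f : (Fin n → Bool) → Fin n → Bool} (hf : NoNegLoop f)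
    (x y : Fin n → Bool) (l : ℕ) (p : ℕ → (Fin n ⊕ Fin n) → Bool)
    (hl : 1 ≤ l) (h0 : p 0 = pair x (negc x)) (hL : p l = pair y (negc y))
    (hstep : ∀ k < l, Step (Fext f) (p k) (p (k + 1)))
    (hint : ∀ k, 0 < k → k < l → ¬ ∃ z, p k = pair z (negc z)) :
    l = 2 ∧ ∃ i, f x i ≠ x i ∧ y = Function.update x i (f x i) ∧
      (p 1 = pair y (negc x) ∨ p 1 = pair x (negc y)) := by
  have hs0 := hstep 0 hl
  rw [h0] at hs0
  obtain ⟨i, hi, hcase⟩ := step_from_omega hs0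
  have hp1 : ¬ ∃ w, p 1 = pair w (negc w) := by
    rcases hcase with h1 | h1 <;> rw [h1]
    · exact A_not_omega hi
    · exact B_not_omega hi
  have hl2 : 2 ≤ l := by
    by_contra hcon
    have : l = 1 := by omega
    subst this
    exact hp1 ⟨y, hL⟩
  have hs1 := hstep 1 (by omega)
  have hstep2 : p 2 = pair (Function.update x i (f x i)) (negc (Function.update x i (f x i)))
      ∨ Reg (p 2) := by
    rcases hcase with h1 | h1
    · rw [h1] at hs1; exact step_from_A hf hi hs1
    · rw [h1] at hs1; exact step_from_B hf hi hs1
  have hnr : ¬ Reg (p 2) := by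
    intro hr
    have hprop : ∀ m, 2 + m ≤ l → Reg (p (2 + m)) := by
      intro m
      induction m with
      | zero => intro _; exact hr
      | succ k ih => intro hm; exact reg_step (ih (by omega)) (hstep (2 + k) (by omega))
    have hRL := hprop (l - 2) (by omega)
    rw [show 2 + (l - 2) = l from by omega, hL] at hRL
    exact reg_not_omega hRL ⟨y, rfl⟩
  have hp2 : p 2 = pair (Function.update x i (f x i)) (negc (Function.update x i (f x i))) :=
    hstep2.resolve_right hnr
  have hl_eq : l = 2 := by
    by_contra hne
    exact hint 2 (by omega) (by omega) ⟨_, hp2⟩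
  subst hl_eq
  rw [hL] at hp2
  have hy : y = Function.update x i (f x i) := (pair_eq_iff.1 hp2).1
  refine ⟨rfl, i, hi, hy, ?_⟩
  rcases hcase with h1 | h1
  · left; rw [h1, hy]
  · right; rw [h1, hy]

end Aux

theorem stmt_11 {n : ℕ} (f : (Fin n → Bool) → Fin n → Bool)
    (hf : NoNegLoop f) (x y : Fin n → Bool) :
    (∀ (l : ℕ) (p : ℕ → (Fin n ⊕ Fin n) → Bool),
        1 ≤ l → p 0 = pair x (negc x) → p l = pair y (negc y) →
        (∀ k < l, Step (Fext f) (p k) (p (k + 1))) →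
        (∀ k, 0 < k → k < l → ¬ ∃ z, p k = pair z (negc z)) →
        l = 2 ∧ (p 1 = pair y (negc x) ∨ p 1 = pair x (negc y))) ∧
    ((∃ (l : ℕ) (p : ℕ → (Fin n ⊕ Fin n) → Bool),
        1 ≤ l ∧ p 0 = pair x (negc x) ∧ p l = pair y (negc y) ∧
        (∀ k < l, Step (Fext f) (p k) (p (k + 1))) ∧
        (∀ k, 0 < k → k < l → ¬ ∃ z, p k = pair z (negc z))) ↔ Step f x y) := by
  constructor
  · intro l p hl h0 hL hstep hint
    obtain ⟨hl2, i, hi, hy, hp1⟩ := main_path hf x y l p hl h0 hL hstep hint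
    exact ⟨hl2, hp1⟩
  · constructor
    · rintro ⟨l, p, hl, h0, hL, hstep, hint⟩
      obtain ⟨hl2, i, hi, hy, hp1⟩ := main_path hf x y l p hl h0 hL hstep hint
      exact ⟨i, hi, hy⟩
    · rintro ⟨i, hi, rfl⟩
      have hfx : f x i = !(x i) := by
        revert hi; cases f x i <;> cases x i <;> simp
      refine ⟨2, fun k => if k = 0 then pair x (negc x)
        else if k = 1 then pair (Function.update x i (f x i)) (negc x)
        else pair (Function.update x i (f x i)) (negc (Function.update x i (f x i))),
        by norm_num, by norm_num, by norm_num, ?_, ?_⟩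
      · intro k hk
        interval_cases k
        · simp only [if_pos rfl]
          norm_num
          refine ⟨Sum.inl i, ?_, ?_⟩
          · rw [Fext_inl, F1_near (Or.inl rfl)]
            exact hi
          · rw [Fext_inl, F1_near (Or.inl rfl)]
            exact (update_pair_inl x (negc x) i (f x i)).symm
        · norm_num
          refine ⟨Sum.inr i, ?_, ?_⟩
          · rw [Fext_inr, negc_negc, F1_near (Or.inr (flip_negc_update x i (f x i) hfx))]
            intro hcon
            have : (!(f x i)) = !(x i) := hcon
            apply hi
            simpa using this
          · rw [Fext_inr, negc_negc, F1_near (Or.inr (flip_negc_update x i (f x i) hfx))]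
            rw [update_pair_inr, negc_update]
      · intro k h1 h2
        interval_cases k
        norm_num
        exact fun w hw => A_not_omega hi ⟨w, hw⟩
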